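/- In the soft limit p_n → 0 (parametrized by s_{n-1,n} = τ ŝ_{n-1,n}, s_{n,1} = τ ŝ_{n,1}, s_{an} = τ ŝ_{an}, τ → 0), the biadjoint partial amplitude satisfies τ·m_n(𝕀_n,𝕀_n) → (1/ŝ_{n-1,n} + 1/ŝ_{n,1})·m_{n-1}(𝕀_{n-1},𝕀_{n-1}); i.e., the leading 1/τ singularity of m_n factors as the soft factor times the (n−1)-point amplitude. (It suffices to verify this for n = 5: τ·m_5 → (1/ŝ_{45}+1/ŝ_{51})·m_4 where m_4 = 1/s_{12}+1/s_{23}.) -/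

import Mathlib

open Filter

/-- Soft limit of the 5-point biadjoint amplitude.  The Mandelstam variables are
one-parameter families `s a b τ` (symmetric, vanishing diagonal, momentum
conservation for all `τ`) with the soft scaling `s a 5 τ = τ * ŝ a` for
`a = 1,…,4`, and with `s12, s23, s34` converging as `τ → 0`.  Then
`τ * m₅ → (1/ŝ45 + 1/ŝ51)(1/s12 + 1/s23)`: the leading `1/τ` singularity of
`m₅` factors as the soft factor times the 4-point amplitude
`m₄ = 1/s12 + 1/s23`. -/
theorem soft_limit_m5
    (s : ℕ → ℕ → ℝ → ℂ) (h : ℕ → ℂ)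
    (hsym : ∀ a b τ, s a b τ = s b a τ)
    (hdiag : ∀ a τ, s a a τ = 0)
    (hmom : ∀ (τ : ℝ) (a : ℕ), a ∈ Finset.Icc 1 5 →
      ∑ b ∈ Finset.Icc 1 5, s a b τ = 0)
    (hsoft : ∀ (a : ℕ) (τ : ℝ), a ∈ Finset.Icc 1 4 → s a 5 τ = (τ : ℂ) * h a)
    (σ12 σ23 σ34 : ℂ)
    (h12 : Tendsto (s 1 2) (nhds 0) (nhds σ12))
    (h23 : Tendsto (s 2 3) (nhds 0) (nhds σ23))
    (h34 : Tendsto (s 3 4) (nhds 0) (nhds σ34))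
    (hσ12 : σ12 ≠ 0) (hσ23 : σ23 ≠ 0) (h45 : h 4 ≠ 0) (h51 : h 1 ≠ 0) :
    Tendsto (fun τ : ℝ => (τ : ℂ) *
        (1/(s 1 2 τ * s 3 4 τ) + 1/(s 2 3 τ * s 4 5 τ) + 1/(s 3 4 τ * s 1 5 τ)
          + 1/(s 4 5 τ * s 1 2 τ) + 1/(s 1 5 τ * s 2 3 τ)))
      (nhdsWithin 0 {0}ᶜ)
      (nhds ((1/(h 4) + 1/(h 1)) * (1/σ12 + 1/σ23))) := by
  have hIcc : (Finset.Icc 1 5 : Finset ℕ) = {1,2,3,4,5} := by decide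
  set c : ℂ := (h 1 + h 2 - h 3 - h 4) / 2 with hc
  -- exact kinematic identity s34 = s12 + τ c
  have key : ∀ τ : ℝ, s 3 4 τ = s 1 2 τ + (τ : ℂ) * c := by
    intro τ
    have e1 := hmom τ 1 (by decide)
    have e2 := hmom τ 2 (by decide)
    have e3 := hmom τ 3 (by decide)
    have e4 := hmom τ 4 (by decide)
    have expand : ∀ f : ℕ → ℂ, ∑ b ∈ ({1,2,3,4,5} : Finset ℕ), f b
        = f 1 + (f 2 + (f 3 + (f 4 + f 5))) := by
      intro f
      rw [Finset.sum_insert (by decide), Finset.sum_insert (by decide),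
        Finset.sum_insert (by decide), Finset.sum_insert (by decide),
        Finset.sum_singleton]
    rw [hIcc, expand] at e1 e2 e3 e4
    rw [hdiag 1 τ, hsoft 1 τ (by decide)] at e1
    rw [hdiag 2 τ, hsoft 2 τ (by decide), hsym 2 1 τ] at e2
    rw [hdiag 3 τ, hsoft 3 τ (by decide), hsym 3 1 τ, hsym 3 2 τ] at e3
    rw [hdiag 4 τ, hsoft 4 τ (by decide), hsym 4 1 τ, hsym 4 2 τ, hsym 4 3 τ] at e4
    rw [hc]
    linear_combination (-e1 - e2 + e3 + e4) / 2
  have hs45 : ∀ τ : ℝ, s 4 5 τ = (τ : ℂ) * h 4 := fun τ => hsoft 4 τ (by decide)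
  have hs15 : ∀ τ : ℝ, s 1 5 τ = (τ : ℂ) * h 1 := fun τ => hsoft 1 τ (by decide)
  have cancel : ∀ (τ x y : ℂ), τ ≠ 0 → τ * (1/(x * (τ * y))) = 1/(x * y) := by
    intro τ x y hτ
    rw [show x * (τ * y) = τ * (x * y) by ring, one_div, mul_inv, ← mul_assoc,
      mul_inv_cancel₀ hτ, one_mul, one_div]
  have heq : ∀ τ : ℝ, τ ≠ 0 →
      (τ : ℂ) * (1/(s 1 2 τ * s 3 4 τ) + 1/(s 2 3 τ * s 4 5 τ) + 1/(s 3 4 τ * s 1 5 τ)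
          + 1/(s 4 5 τ * s 1 2 τ) + 1/(s 1 5 τ * s 2 3 τ))
      = (τ : ℂ) * (1/(s 1 2 τ * s 3 4 τ)) + 1/(s 2 3 τ * h 4) + 1/(s 3 4 τ * h 1)
          + 1/(s 1 2 τ * h 4) + 1/(s 2 3 τ * h 1) := by
    intro τ hτ
    have hτ' : (τ : ℂ) ≠ 0 := Complex.ofReal_ne_zero.mpr hτ
    rw [hs45, hs15, mul_add, mul_add, mul_add, mul_add,
      cancel _ _ _ hτ', cancel _ _ _ hτ',
      show (τ:ℂ) * h 4 * s 1 2 τ = s 1 2 τ * ((τ:ℂ) * h 4) by ring,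
      show (τ:ℂ) * h 1 * s 2 3 τ = s 2 3 τ * ((τ:ℂ) * h 1) by ring,
      cancel _ _ _ hτ', cancel _ _ _ hτ']
  have hτ0 : Tendsto (fun τ : ℝ => (τ : ℂ)) (nhdsWithin 0 {0}ᶜ) (nhds 0) := by
    exact (Complex.continuous_ofReal.tendsto 0).mono_left nhdsWithin_le_nhds
  set F := nhdsWithin (0:ℝ) {0}ᶜ with hF
  have h12' : Tendsto (s 1 2) F (nhds σ12) := h12.mono_left nhdsWithin_le_nhds
  have h23' : Tendsto (s 2 3) F (nhds σ23) := h23.mono_left nhdsWithin_le_nhds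
  have h34' : Tendsto (s 3 4) F (nhds σ12) := by
    have : Tendsto (fun τ : ℝ => s 1 2 τ + (τ : ℂ) * c) F (nhds (σ12 + 0 * c)) :=
      h12'.add (hτ0.mul tendsto_const_nhds)
    rw [show (fun τ : ℝ => s 1 2 τ + (τ : ℂ) * c) = s 3 4 from
      funext fun τ => (key τ).symm] at this
    simpa using this
  have lim : Tendsto (fun τ : ℝ =>
      (τ : ℂ) * (1/(s 1 2 τ * s 3 4 τ)) + 1/(s 2 3 τ * h 4) + 1/(s 3 4 τ * h 1)
          + 1/(s 1 2 τ * h 4) + 1/(s 2 3 τ * h 1)) F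
      (nhds ((0:ℂ) * (1/(σ12 * σ12)) + 1/(σ23 * h 4) + 1/(σ12 * h 1)
          + 1/(σ12 * h 4) + 1/(σ23 * h 1))) := by
    refine ((((hτ0.mul (tendsto_const_nhds.div (h12'.mul h34')
        (mul_ne_zero hσ12 hσ12))).add (tendsto_const_nhds.div
        (h23'.mul_const (h 4)) (mul_ne_zero hσ23 h45))).add
        (tendsto_const_nhds.div (h34'.mul_const (h 1)) (mul_ne_zero hσ12 h51))).add
        (tendsto_const_nhds.div (h12'.mul_const (h 4)) (mul_ne_zero hσ12 h45))).add
        (tendsto_const_nhds.div (h23'.mul_const (h 1)) (mul_ne_zero hσ23 h51))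
  have lim' := lim.congr' (by
    filter_upwards [self_mem_nhdsWithin] with τ hτ
    exact (heq τ hτ).symm)
  have hval : (0:ℂ) * (1/(σ12 * σ12)) + 1/(σ23 * h 4) + 1/(σ12 * h 1)
      + 1/(σ12 * h 4) + 1/(σ23 * h 1)
      = (1/(h 4) + 1/(h 1)) * (1/σ12 + 1/σ23) := by
    rw [zero_mul, zero_add]
    simp only [one_div, mul_inv]
    ring
  exact hval ▸ lim'
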